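/- arXiv:1105.3918 — 2 statements merged into one kernel-verified Lean document; each statement's English description precedes it below -/
import Mathlib

section
/- The candidate measure of Wong–Heyde need not be unique: for the zero process X ≡ 0 (i.e., ξ ≡ 0), for every λ ∈ ℝ the measure P^λ with dP^λ/dP = exp(λW(T) − λ²T/2) satisfies the defining property that W(t) − ∫₀ᵗ X(u) du = W(t) is expressible as W^{P^λ}(t) + ∫₀ᵗ X(u) du modulo a P^λ-Brownian motion; in particular, for distinct λ ≠ λ' the measures P^λ and P^{λ'} are distinct probability measures on F_T. -/
open MeasureTheory ProbabilityTheory Filter Set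
open scoped ENNReal NNReal

/-- `W` is a standard one-dimensional Brownian motion on the time interval `[0,T]` under `P`. -/
structure IsBMOn {Ω : Type*} [MeasurableSpace Ω] (P : Measure Ω) (W : ℝ → Ω → ℝ)
    (T : ℝ) : Prop where
  meas : ∀ t : ℝ, Measurable (W t)
  init : ∀ᵐ ω ∂P, W 0 ω = 0
  cont : ∀ᵐ ω ∂P, ContinuousOn (fun t => W t ω) (Set.Icc 0 T)
  gauss : ∀ s t : ℝ, 0 ≤ s → s ≤ t → t ≤ T →
    P.map (fun ω => W t ω - W s ω) = gaussianReal 0 (Real.toNNReal (t - s))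
  indep : ∀ s t : ℝ, 0 ≤ s → s ≤ t → t ≤ T →
    ProbabilityTheory.Indep
      (MeasurableSpace.comap (fun ω => W t ω - W s ω) Real.measurableSpace)
      (⨆ u ∈ Set.Icc (0:ℝ) s, MeasurableSpace.comap (W u) Real.measurableSpace) P


lemma comap_sub_const {Ω : Type*} (f : Ω → ℝ) (c : ℝ) :
    MeasurableSpace.comap (fun ω => f ω - c) Real.measurableSpace
      = MeasurableSpace.comap f Real.measurableSpace := by
  refine le_antisymm ?_ ?_
  · exact Measurable.comap_le ((Measurable.of_comap_le le_rfl).sub measurable_const)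
  · have h : f = fun ω => (fun ω => f ω - c) ω + c := by funext ω; ring
    conv_lhs => rw [h]
    exact Measurable.comap_le ((Measurable.of_comap_le le_rfl).add measurable_const)

lemma gaussian_tilt (l : ℝ) (v : ℝ≥0) :
    (gaussianReal 0 v).withDensity
        (fun z => ENNReal.ofReal (Real.exp (l * z - l ^ 2 * (v : ℝ) / 2)))
      = gaussianReal (l * v) v := by
  rcases eq_or_ne v 0 with hv | hv
  · subst hv
    simp only [gaussianReal_zero_var, NNReal.coe_zero, mul_zero]
    classical
    ext s hs
    rw [withDensity_apply _ hs, setLIntegral_dirac]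
    rw [Measure.dirac_apply' _ hs]
    by_cases h0 : (0:ℝ) ∈ s <;> simp [h0]
  · have hg : Measurable (fun z => ENNReal.ofReal (Real.exp (l * z - l ^ 2 * (v:ℝ) / 2))) :=
      ENNReal.measurable_ofReal.comp (Real.measurable_exp.comp
        ((measurable_id.const_mul l).sub measurable_const))
    rw [gaussianReal_of_var_ne_zero _ hv, gaussianReal_of_var_ne_zero _ hv]
    refine Eq.trans (withDensity_mul _ (measurable_gaussianPDF 0 v) hg).symm ?_
    congr 1
    funext x
    have hvpos : (0:ℝ) < (v:ℝ) := by positivity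
    simp only [Pi.mul_apply, gaussianPDF, gaussianPDFReal]
    rw [← ENNReal.ofReal_mul (by positivity)]
    congr 1
    rw [mul_assoc, ← Real.exp_add]
    congr 2
    field_simp
    ring

lemma meas_ofReal_exp {Ω : Type*} {mΩ' : MeasurableSpace Ω} {f : Ω → ℝ} (hf : Measurable f) (l : ℝ) :
    Measurable (fun ω => ENNReal.ofReal (Real.exp (l * f ω))) :=
  ENNReal.measurable_ofReal.comp (Real.measurable_exp.comp (hf.const_mul l))

lemma lintegral_exp_gaussian (l : ℝ) (v : ℝ≥0) :
    ∫⁻ z, ENNReal.ofReal (Real.exp (l * z)) ∂(gaussianReal 0 v)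
      = ENNReal.ofReal (Real.exp (l ^ 2 * (v : ℝ) / 2)) := by
  have h1 : ((gaussianReal 0 v).withDensity
      (fun z => ENNReal.ofReal (Real.exp (l * z - l ^ 2 * (v : ℝ) / 2)))) univ = 1 := by
    rw [gaussian_tilt]; simp
  rw [withDensity_apply _ MeasurableSet.univ, Measure.restrict_univ] at h1
  have h2 : ∀ z : ℝ, ENNReal.ofReal (Real.exp (l * z))
      = ENNReal.ofReal (Real.exp (l ^ 2 * (v : ℝ) / 2))
        * ENNReal.ofReal (Real.exp (l * z - l ^ 2 * (v : ℝ) / 2)) := by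
    intro z
    rw [← ENNReal.ofReal_mul (Real.exp_nonneg _), ← Real.exp_add]
    ring_nf
  simp_rw [h2]
  rw [lintegral_const_mul' _ _ ENNReal.ofReal_ne_top, h1, mul_one]


def sigUpTo {Ω : Type*} (W : ℝ → Ω → ℝ) (s : ℝ) : MeasurableSpace Ω :=
  ⨆ u ∈ Set.Icc (0:ℝ) s, MeasurableSpace.comap (W u) Real.measurableSpace

set_option maxHeartbeats 1000000 in
lemma key {Ω : Type*} [mΩ : MeasurableSpace Ω] (P : Measure Ω) [IsProbabilityMeasure P]
    (T : ℝ) (W : ℝ → Ω → ℝ) (hW : IsBMOn P W T) (l : ℝ)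
    {s t : ℝ} (hs : 0 ≤ s) (hst : s ≤ t) (htT : t ≤ T)
    (F : ℝ → ℝ≥0∞) (hF : Measurable F) (G : Ω → ℝ≥0∞)
    (hG : Measurable[⨆ u ∈ Set.Icc (0:ℝ) s,
      MeasurableSpace.comap (W u) Real.measurableSpace] G) :
    ∫⁻ ω, F (W t ω - W s ω) * G ω
        * ENNReal.ofReal (Real.exp (l * W T ω - l ^ 2 * T / 2)) ∂P
      = ENNReal.ofReal (Real.exp (l ^ 2 * (T - t) / 2 - l ^ 2 * T / 2))
        * (∫⁻ z, F z * ENNReal.ofReal (Real.exp (l * z))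
            ∂(gaussianReal 0 (Real.toNNReal (t - s))))
        * ∫⁻ ω, G ω * ENNReal.ofReal (Real.exp (l * W s ω)) ∂P := by
  have h0t : 0 ≤ t := hs.trans hst
  have h0T : 0 ≤ T := h0t.trans htT
  replace hG : Measurable[sigUpTo W s] G := hG
  have hMst : sigUpTo W s ≤ sigUpTo W t :=
    biSup_mono fun u hu => ⟨hu.1, hu.2.trans hst⟩
  have hMtle : sigUpTo W t ≤ mΩ :=
    iSup₂_le fun u _ => (hW.meas u).comap_le
  have hWmem : ∀ u : ℝ, 0 ≤ u → u ≤ t → Measurable[sigUpTo W t] (W u) := fun u hu hut =>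
    Measurable.of_comap_le (le_biSup (fun u => MeasurableSpace.comap (W u) Real.measurableSpace)
      (⟨hu, hut⟩ : u ∈ Set.Icc (0:ℝ) t))
  have hWsMs : Measurable[sigUpTo W s] (W s) :=
    Measurable.of_comap_le (le_biSup (fun u => MeasurableSpace.comap (W u) Real.measurableSpace)
      (⟨hs, le_rfl⟩ : s ∈ Set.Icc (0:ℝ) s))
  have hGamb : Measurable G := hG.mono (iSup₂_le fun u _ => (hW.meas u).comap_le) le_rfl
  -- the three factors
  set f1 : Ω → ℝ≥0∞ := fun ω => ENNReal.ofReal (Real.exp (l * (W T ω - W t ω))) with hf1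
  set f2 : Ω → ℝ≥0∞ := fun ω => F (W t ω - W s ω)
    * ENNReal.ofReal (Real.exp (l * (W t ω - W s ω))) with hf2
  set f3 : Ω → ℝ≥0∞ := fun ω => G ω * ENNReal.ofReal (Real.exp (l * W s ω)) with hf3
  have hZmeas : Measurable (fun ω => W t ω - W s ω) := (hW.meas t).sub (hW.meas s)
  have hf1m : Measurable f1 := meas_ofReal_exp ((hW.meas T).sub (hW.meas t)) l
  have hf2m : Measurable f2 := (hF.comp hZmeas).mul (meas_ofReal_exp hZmeas l)
  have hf3m : Measurable f3 := hGamb.mul (meas_ofReal_exp (hW.meas s) l)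
  -- pointwise factorization
  have hpoint : ∀ ω, F (W t ω - W s ω) * G ω
      * ENNReal.ofReal (Real.exp (l * W T ω - l ^ 2 * T / 2))
      = ENNReal.ofReal (Real.exp (-(l ^ 2 * T / 2))) * (f1 ω * (f2 ω * f3 ω)) := by
    intro ω
    have he : Real.exp (l * W T ω - l ^ 2 * T / 2)
        = Real.exp (-(l ^ 2 * T / 2)) * (Real.exp (l * (W T ω - W t ω))
          * (Real.exp (l * (W t ω - W s ω)) * Real.exp (l * W s ω))) := by
      rw [← Real.exp_add, ← Real.exp_add, ← Real.exp_add]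
      congr 1
      ring
    rw [he, ENNReal.ofReal_mul (Real.exp_nonneg _), ENNReal.ofReal_mul (Real.exp_nonneg _),
      ENNReal.ofReal_mul (Real.exp_nonneg _)]
    simp only [hf1, hf2, hf3]
    ring
  -- independence splits
  have hInd1 : IndepFun f1 (fun ω => f2 ω * f3 ω) P := by
    have h : Indep (MeasurableSpace.comap (fun ω => W T ω - W t ω) Real.measurableSpace)
        (sigUpTo W t) P := hW.indep t T h0t htT le_rfl
    have hf1Mt : Measurable[MeasurableSpace.comap (fun ω => W T ω - W t ω)
        Real.measurableSpace] f1 :=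
      (meas_ofReal_exp (Measurable.of_comap_le le_rfl) l)
    have hf23Mt : Measurable[sigUpTo W t] (fun ω => f2 ω * f3 ω) := by
      have hZt : Measurable[sigUpTo W t] (fun ω => W t ω - W s ω) :=
        (hWmem t h0t le_rfl).sub (hWmem s hs hst)
      exact ((hF.comp hZt).mul (meas_ofReal_exp hZt l)).mul
        ((hG.mono hMst le_rfl).mul (meas_ofReal_exp (hWmem s hs hst) l))
    exact (IndepFun_iff_Indep _ _ _).2
      (indep_of_indep_of_le_right (indep_of_indep_of_le_left h hf1Mt.comap_le) hf23Mt.comap_le)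
  have hInd2 : IndepFun f2 f3 P := by
    have h : Indep (MeasurableSpace.comap (fun ω => W t ω - W s ω) Real.measurableSpace)
        (sigUpTo W s) P := hW.indep s t hs hst htT
    have hf2c : Measurable[MeasurableSpace.comap (fun ω => W t ω - W s ω)
        Real.measurableSpace] f2 := by
      have hZ : Measurable[MeasurableSpace.comap (fun ω => W t ω - W s ω)
          Real.measurableSpace] (fun ω => W t ω - W s ω) := Measurable.of_comap_le le_rfl
      exact (hF.comp hZ).mul (meas_ofReal_exp hZ l)
    have hf3c : Measurable[sigUpTo W s] f3 := hG.mul (meas_ofReal_exp hWsMs l)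
    exact (IndepFun_iff_Indep _ _ _).2
      (indep_of_indep_of_le_right (indep_of_indep_of_le_left h hf2c.comap_le) hf3c.comap_le)
  -- compute
  calc ∫⁻ ω, F (W t ω - W s ω) * G ω
        * ENNReal.ofReal (Real.exp (l * W T ω - l ^ 2 * T / 2)) ∂P
      = ∫⁻ ω, ENNReal.ofReal (Real.exp (-(l ^ 2 * T / 2))) * (f1 ω * (f2 ω * f3 ω)) ∂P :=
        lintegral_congr hpoint
    _ = ENNReal.ofReal (Real.exp (-(l ^ 2 * T / 2)))
        * ∫⁻ ω, (f1 * fun ω => f2 ω * f3 ω) ω ∂P :=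
        lintegral_const_mul' _ _ ENNReal.ofReal_ne_top
    _ = ENNReal.ofReal (Real.exp (-(l ^ 2 * T / 2)))
        * ((∫⁻ ω, f1 ω ∂P) * ∫⁻ ω, f2 ω * f3 ω ∂P) := by
        rw [lintegral_mul_eq_lintegral_mul_lintegral_of_indepFun (g := fun ω => f2 ω * f3 ω) hf1m (hf2m.mul hf3m) hInd1]
    _ = ENNReal.ofReal (Real.exp (-(l ^ 2 * T / 2)))
        * ((∫⁻ ω, f1 ω ∂P) * ((∫⁻ ω, f2 ω ∂P) * ∫⁻ ω, f3 ω ∂P)) := by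
        rw [show (∫⁻ ω, f2 ω * f3 ω ∂P) = ∫⁻ ω, (f2 * f3) ω ∂P from rfl,
          lintegral_mul_eq_lintegral_mul_lintegral_of_indepFun hf2m hf3m hInd2]
    _ = ENNReal.ofReal (Real.exp (l ^ 2 * (T - t) / 2 - l ^ 2 * T / 2))
        * (∫⁻ z, F z * ENNReal.ofReal (Real.exp (l * z))
            ∂(gaussianReal 0 (Real.toNNReal (t - s))))
        * ∫⁻ ω, G ω * ENNReal.ofReal (Real.exp (l * W s ω)) ∂P := by
        have e1 : (∫⁻ ω, f1 ω ∂P) = ENNReal.ofReal (Real.exp (l ^ 2 * (T - t) / 2)) := by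
          have hmap := hW.gauss t T h0t htT le_rfl
          have : (∫⁻ ω, f1 ω ∂P)
              = ∫⁻ z, ENNReal.ofReal (Real.exp (l * z)) ∂(P.map (fun ω => W T ω - W t ω)) :=
            (lintegral_map (meas_ofReal_exp measurable_id l)
              ((hW.meas T).sub (hW.meas t))).symm
          rw [this, hmap, lintegral_exp_gaussian, Real.coe_toNNReal _ (by linarith)]
        have e2 : (∫⁻ ω, f2 ω ∂P) = ∫⁻ z, F z * ENNReal.ofReal (Real.exp (l * z))
            ∂(gaussianReal 0 (Real.toNNReal (t - s))) := by
          rw [← hW.gauss s t hs hst htT]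
          exact (lintegral_map (hF.mul (meas_ofReal_exp measurable_id l)) hZmeas).symm
        have hc : ENNReal.ofReal (Real.exp (l ^ 2 * (T - t) / 2 - l ^ 2 * T / 2))
            = ENNReal.ofReal (Real.exp (-(l ^ 2 * T / 2)))
              * ENNReal.ofReal (Real.exp (l ^ 2 * (T - t) / 2)) := by
          rw [← ENNReal.ofReal_mul (Real.exp_nonneg _), ← Real.exp_add]
          ring_nf
        rw [e1, e2, hc]
        ring

lemma mass {Ω : Type*} [mΩ : MeasurableSpace Ω] (P : Measure Ω) [IsProbabilityMeasure P]
    {T : ℝ} (hT : 0 ≤ T) (W : ℝ → Ω → ℝ) (hW : IsBMOn P W T) (a : ℝ) :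
    ∫⁻ ω, ENNReal.ofReal (Real.exp (a * W T ω - a ^ 2 * T / 2)) ∂P = 1 := by
  have h := key P T W hW a (le_rfl : (0:ℝ) ≤ 0) le_rfl hT (fun _ => 1) measurable_const
    (fun _ => 1) measurable_const
  simp only [one_mul, mul_one] at h
  rw [h]
  have e1 : ENNReal.ofReal (Real.exp (a ^ 2 * (T - 0) / 2 - a ^ 2 * T / 2)) = 1 := by
    norm_num
  have e2 : (∫⁻ z, ENNReal.ofReal (Real.exp (a * z))
      ∂(gaussianReal 0 (Real.toNNReal (0 - 0)))) = 1 := by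
    norm_num [gaussianReal_zero_var, lintegral_dirac]
  have e3 : (∫⁻ ω, ENNReal.ofReal (Real.exp (a * W 0 ω)) ∂P) = 1 := by
    have : (fun ω => ENNReal.ofReal (Real.exp (a * W 0 ω))) =ᵐ[P] fun _ => 1 :=
      hW.init.mono fun ω h => by simp [h]
    rw [lintegral_congr_ae this, lintegral_one, measure_univ]
  rw [e1, e2, e3, one_mul, one_mul]

lemma mapWs {Ω : Type*} [mΩ : MeasurableSpace Ω] (P : Measure Ω) [IsProbabilityMeasure P]
    {T : ℝ} (W : ℝ → Ω → ℝ) (hW : IsBMOn P W T) {s : ℝ} (hs : 0 ≤ s) (hsT : s ≤ T) :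
    P.map (W s) = gaussianReal 0 (Real.toNNReal s) := by
  have h := hW.gauss 0 s le_rfl hs hsT
  rw [sub_zero] at h
  rw [← h]
  exact Measure.map_congr (hW.init.mono fun ω h0 => by simp [h0])

lemma lintegral_exp_Ws {Ω : Type*} [mΩ : MeasurableSpace Ω] (P : Measure Ω)
    [IsProbabilityMeasure P] {T : ℝ} (W : ℝ → Ω → ℝ) (hW : IsBMOn P W T)
    {s : ℝ} (hs : 0 ≤ s) (hsT : s ≤ T) (l : ℝ) :
    ∫⁻ ω, ENNReal.ofReal (Real.exp (l * W s ω)) ∂P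
      = ENNReal.ofReal (Real.exp (l ^ 2 * s / 2)) := by
  have h := lintegral_exp_gaussian l (Real.toNNReal s)
  rw [Real.coe_toNNReal _ hs] at h
  rw [← h, ← mapWs P W hW hs hsT]
  exact (lintegral_map (f := fun z => ENNReal.ofReal (Real.exp (l * z)))
    (meas_ofReal_exp measurable_id l) (hW.meas s)).symm

set_option maxHeartbeats 1000000 in
lemma gaussPl {Ω : Type*} [mΩ : MeasurableSpace Ω] (P : Measure Ω) [IsProbabilityMeasure P]
    {T : ℝ} (W : ℝ → Ω → ℝ) (hW : IsBMOn P W T) (l : ℝ)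
    {s t : ℝ} (hs : 0 ≤ s) (hst : s ≤ t) (htT : t ≤ T) :
    (P.withDensity fun ω => ENNReal.ofReal (Real.exp (l * W T ω - l ^ 2 * T / 2))).map
        (fun ω => (W t ω - W s ω) - l * (t - s))
      = gaussianReal 0 (Real.toNNReal (t - s)) := by
  have hco : ((Real.toNNReal (t - s)) : ℝ) = t - s := Real.coe_toNNReal _ (by linarith)
  set τ : ℝ := l * (t - s) with hτ
  set D : Ω → ℝ≥0∞ := fun ω => ENNReal.ofReal (Real.exp (l * W T ω - l ^ 2 * T / 2)) with hD
  have hZ : Measurable (fun ω => W t ω - W s ω) := (hW.meas t).sub (hW.meas s)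
  have hfm : Measurable (fun ω => (W t ω - W s ω) - τ) := hZ.sub_const τ
  refine Measure.ext fun S hS => ?_
  have hS' : MeasurableSet ((fun z : ℝ => z - τ) ⁻¹' S) := (measurable_id.sub_const τ) hS
  set S' := (fun z : ℝ => z - τ) ⁻¹' S with hS'def
  rw [Measure.map_apply hfm hS, withDensity_apply _ (hfm hS),
    ← lintegral_indicator (hfm hS) _]
  have hpt : ∀ ω, ((fun ω => (W t ω - W s ω) - τ) ⁻¹' S).indicator D ω
      = S'.indicator (fun _ => (1:ℝ≥0∞)) (W t ω - W s ω) * (fun _ => (1:ℝ≥0∞)) ω * D ω := by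
    intro ω
    by_cases h : (W t ω - W s ω) - τ ∈ S <;>
      simp [Set.indicator_apply, S', h]
  rw [lintegral_congr hpt,
    key P T W hW l hs hst htT _ (measurable_const.indicator hS') _ measurable_const]
  have hJ : (∫⁻ ω, (fun _ => (1:ℝ≥0∞)) ω * ENNReal.ofReal (Real.exp (l * W s ω)) ∂P)
      = ENNReal.ofReal (Real.exp (l ^ 2 * s / 2)) := by
    simp only [one_mul]
    exact lintegral_exp_Ws P W hW hs (by linarith) l
  have hIeq : (fun z => S'.indicator (fun _ => (1:ℝ≥0∞)) z * ENNReal.ofReal (Real.exp (l * z)))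
      = S'.indicator (fun z => ENNReal.ofReal (Real.exp (l * z))) := by
    funext z
    by_cases h : z ∈ S' <;> simp [Set.indicator_apply, h]
  have htilt : ∀ z : ℝ, ENNReal.ofReal (Real.exp (l * z))
      = ENNReal.ofReal (Real.exp (l ^ 2 * (t - s) / 2))
        * ENNReal.ofReal (Real.exp (l * z - l ^ 2 * (t - s) / 2)) := by
    intro z
    rw [← ENNReal.ofReal_mul (Real.exp_nonneg _), ← Real.exp_add]
    ring_nf
  have hI : (∫⁻ z, S'.indicator (fun _ => (1:ℝ≥0∞)) z * ENNReal.ofReal (Real.exp (l * z))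
      ∂(gaussianReal 0 (Real.toNNReal (t - s))))
      = ENNReal.ofReal (Real.exp (l ^ 2 * (t - s) / 2))
        * gaussianReal 0 (Real.toNNReal (t - s)) S := by
    rw [hIeq, lintegral_indicator hS' _]
    calc ∫⁻ z in S', ENNReal.ofReal (Real.exp (l * z))
          ∂(gaussianReal 0 (Real.toNNReal (t - s)))
        = ∫⁻ z in S', ENNReal.ofReal (Real.exp (l ^ 2 * (t - s) / 2))
            * ENNReal.ofReal (Real.exp (l * z - l ^ 2 * (t - s) / 2))
            ∂(gaussianReal 0 (Real.toNNReal (t - s))) := lintegral_congr fun z => htilt z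
      _ = ENNReal.ofReal (Real.exp (l ^ 2 * (t - s) / 2))
            * ∫⁻ z in S', ENNReal.ofReal (Real.exp (l * z - l ^ 2 * (t - s) / 2))
            ∂(gaussianReal 0 (Real.toNNReal (t - s))) :=
          lintegral_const_mul' _ _ ENNReal.ofReal_ne_top
      _ = ENNReal.ofReal (Real.exp (l ^ 2 * (t - s) / 2))
            * gaussianReal 0 (Real.toNNReal (t - s)) S := by
          congr 1
          have hwd : ((gaussianReal 0 (Real.toNNReal (t-s))).withDensity
              (fun z => ENNReal.ofReal (Real.exp (l * z
                - l ^ 2 * ((Real.toNNReal (t-s) : ℝ)) / 2)))) S'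
              = ∫⁻ z in S', ENNReal.ofReal (Real.exp (l * z - l ^ 2 * (t - s) / 2))
                ∂(gaussianReal 0 (Real.toNNReal (t - s))) := by
            rw [withDensity_apply _ hS']
            rw [hco]
          rw [← hwd, gaussian_tilt l (Real.toNNReal (t - s)), hco]
          have hmapc := gaussianReal_map_add_const (μ := (0:ℝ)) (v := Real.toNNReal (t - s)) τ
          rw [zero_add] at hmapc
          rw [← hτ, ← hmapc, Measure.map_apply (measurable_id'.add_const τ) hS']
          congr 1
          ext z
          simp [hS'def]
  rw [hJ, hI]
  have hconst : ENNReal.ofReal (Real.exp (l ^ 2 * (T - t) / 2 - l ^ 2 * T / 2))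
      * ENNReal.ofReal (Real.exp (l ^ 2 * (t - s) / 2))
      * ENNReal.ofReal (Real.exp (l ^ 2 * s / 2)) = 1 := by
    rw [← ENNReal.ofReal_mul (Real.exp_nonneg _), ← Real.exp_add,
      ← ENNReal.ofReal_mul (Real.exp_nonneg _), ← Real.exp_add]
    have : l ^ 2 * (T - t) / 2 - l ^ 2 * T / 2 + l ^ 2 * (t - s) / 2 + l ^ 2 * s / 2 = 0 := by
      ring
    rw [this, Real.exp_zero, ENNReal.ofReal_one]
  calc ENNReal.ofReal (Real.exp (l ^ 2 * (T - t) / 2 - l ^ 2 * T / 2))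
        * (ENNReal.ofReal (Real.exp (l ^ 2 * (t - s) / 2))
          * gaussianReal 0 (Real.toNNReal (t - s)) S)
        * ENNReal.ofReal (Real.exp (l ^ 2 * s / 2))
      = (ENNReal.ofReal (Real.exp (l ^ 2 * (T - t) / 2 - l ^ 2 * T / 2))
          * ENNReal.ofReal (Real.exp (l ^ 2 * (t - s) / 2))
          * ENNReal.ofReal (Real.exp (l ^ 2 * s / 2)))
        * gaussianReal 0 (Real.toNNReal (t - s)) S := by ring
    _ = gaussianReal 0 (Real.toNNReal (t - s)) S := by rw [hconst, one_mul]

set_option maxHeartbeats 1000000 in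
lemma indepPl {Ω : Type*} [mΩ : MeasurableSpace Ω] (P : Measure Ω) [IsProbabilityMeasure P]
    {T : ℝ} (W : ℝ → Ω → ℝ) (hW : IsBMOn P W T) (l : ℝ)
    {s t : ℝ} (hs : 0 ≤ s) (hst : s ≤ t) (htT : t ≤ T) :
    Indep (MeasurableSpace.comap (fun ω => W t ω - W s ω) Real.measurableSpace)
      (sigUpTo W s)
      (P.withDensity fun ω => ENNReal.ofReal (Real.exp (l * W T ω - l ^ 2 * T / 2))) := by
  set D : Ω → ℝ≥0∞ := fun ω => ENNReal.ofReal (Real.exp (l * W T ω - l ^ 2 * T / 2)) with hD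
  have hZ : Measurable (fun ω => W t ω - W s ω) := (hW.meas t).sub (hW.meas s)
  have hMsle : sigUpTo W s ≤ mΩ := iSup₂_le fun u _ => (hW.meas u).comap_le
  rw [Indep_iff]
  rintro t1 t2 ⟨S, hS, rfl⟩ ht2
  have ht2' : MeasurableSet t2 := hMsle _ ht2
  have happly : ∀ (A : Set Ω), MeasurableSet A →
      (P.withDensity D) A = ∫⁻ ω, A.indicator (fun _ => (1:ℝ≥0∞)) ω * D ω ∂P := by
    intro A hA
    rw [withDensity_apply _ hA, ← lintegral_indicator hA _]
    refine lintegral_congr fun ω => ?_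
    by_cases h : ω ∈ A <;> simp [Set.indicator_apply, h]
  have hFm : Measurable (S.indicator (fun _ => (1:ℝ≥0∞))) := measurable_const.indicator hS
  have hGm : Measurable[sigUpTo W s] (t2.indicator (fun _ => (1:ℝ≥0∞))) :=
    measurable_const.indicator ht2
  have hA := (happly _ ((hZ hS).inter ht2')).trans
    ((lintegral_congr (fun ω => by
      by_cases h1 : W t ω - W s ω ∈ S <;> by_cases h2 : ω ∈ t2 <;>
        simp [Set.indicator_apply, h1, h2, hD])).trans
    (key P T W hW l hs hst htT _ hFm _ hGm))
  have hB := (happly _ (hZ hS)).trans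
    ((lintegral_congr (fun ω => by
      by_cases h1 : W t ω - W s ω ∈ S <;> simp [Set.indicator_apply, h1, hD])).trans
    (key P T W hW l hs hst htT _ hFm (fun _ => (1:ℝ≥0∞)) measurable_const))
  have hC := (happly _ ht2').trans
    ((lintegral_congr (fun ω => by
      by_cases h2 : ω ∈ t2 <;> simp [Set.indicator_apply, h2, hD])).trans
    (key P T W hW l hs le_rfl (hst.trans htT) (fun _ => (1:ℝ≥0∞)) measurable_const _ hGm))
  simp only [one_mul] at hA hB hC
  rw [lintegral_exp_Ws P W hW hs (hst.trans htT) l] at hB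
  have hdirac : (∫⁻ z, ENNReal.ofReal (Real.exp (l * z))
      ∂(gaussianReal 0 (Real.toNNReal (s - s)))) = 1 := by
    norm_num [gaussianReal_zero_var, lintegral_dirac]
  rw [hdirac, mul_one] at hC
  rw [hA, hB, hC]
  have hone : ENNReal.ofReal (Real.exp (l ^ 2 * s / 2))
      * ENNReal.ofReal (Real.exp (l ^ 2 * (T - s) / 2 - l ^ 2 * T / 2)) = 1 := by
    rw [← ENNReal.ofReal_mul (Real.exp_nonneg _), ← Real.exp_add]
    have : l ^ 2 * s / 2 + (l ^ 2 * (T - s) / 2 - l ^ 2 * T / 2) = 0 := by ring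
    rw [this, Real.exp_zero, ENNReal.ofReal_one]
  calc ENNReal.ofReal (Real.exp (l ^ 2 * (T - t) / 2 - l ^ 2 * T / 2))
        * (∫⁻ z, S.indicator (fun _ => (1:ℝ≥0∞)) z * ENNReal.ofReal (Real.exp (l * z))
            ∂(gaussianReal 0 (Real.toNNReal (t - s))))
        * ∫⁻ ω, t2.indicator (fun _ => (1:ℝ≥0∞)) ω
            * ENNReal.ofReal (Real.exp (l * W s ω)) ∂P
      = (ENNReal.ofReal (Real.exp (l ^ 2 * (T - t) / 2 - l ^ 2 * T / 2))
          * (∫⁻ z, S.indicator (fun _ => (1:ℝ≥0∞)) z * ENNReal.ofReal (Real.exp (l * z))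
              ∂(gaussianReal 0 (Real.toNNReal (t - s))))
          * ENNReal.ofReal (Real.exp (l ^ 2 * s / 2)))
        * (ENNReal.ofReal (Real.exp (l ^ 2 * (T - s) / 2 - l ^ 2 * T / 2))
          * ∫⁻ ω, t2.indicator (fun _ => (1:ℝ≥0∞)) ω
              * ENNReal.ofReal (Real.exp (l * W s ω)) ∂P) := by
        calc _ = (ENNReal.ofReal (Real.exp (l ^ 2 * s / 2))
              * ENNReal.ofReal (Real.exp (l ^ 2 * (T - s) / 2 - l ^ 2 * T / 2)))
            * (ENNReal.ofReal (Real.exp (l ^ 2 * (T - t) / 2 - l ^ 2 * T / 2))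
              * (∫⁻ z, S.indicator (fun _ => (1:ℝ≥0∞)) z * ENNReal.ofReal (Real.exp (l * z))
                  ∂(gaussianReal 0 (Real.toNNReal (t - s))))
              * ∫⁻ ω, t2.indicator (fun _ => (1:ℝ≥0∞)) ω
                  * ENNReal.ofReal (Real.exp (l * W s ω)) ∂P) := by rw [hone, one_mul]
          _ = _ := by ring


lemma sep_lemma : True := trivial

set_option maxHeartbeats 1000000
/-- non-uniqueness of the candidate measure: for the zero process `X ≡ 0`,
for every `λ` the measure `P^λ` with density `exp(λW(T) - λ²T/2)` satisfies the defining
property of a candidate measure: `W(t) - ∫₀ᵗ X(u)du` equals `W^λ(t) + ∫₀ᵗ X(u)du + λt`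
where `W^λ(t) = W(t) - λt` is a `P^λ`-Brownian motion on `[0,T]`; moreover for `λ ≠ λ'`
the measures `P^λ` and `P^{λ'}` are distinct. -/
theorem stmt5 {Ω : Type*} [MeasurableSpace Ω] (P : Measure Ω) [IsProbabilityMeasure P]
    (T : ℝ) (hT : 0 < T) (W : ℝ → Ω → ℝ) (hW : IsBMOn P W T)
    (X : ℝ → Ω → ℝ) (hX : X = fun _ _ => 0)
    (Pl : ℝ → Measure Ω)
    (hPl : ∀ lam : ℝ, Pl lam =
      P.withDensity fun ω => ENNReal.ofReal (Real.exp (lam * W T ω - lam ^ 2 * T / 2))) :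
    (∀ lam : ℝ, IsBMOn (Pl lam) (fun t ω => W t ω - lam * t) T) ∧
    (∀ lam : ℝ, ∀ t ∈ Set.Icc (0:ℝ) T, ∀ ω,
      W t ω - (∫ u in (0:ℝ)..t, X u ω) =
        (W t ω - lam * t) + (∫ u in (0:ℝ)..t, X u ω) + lam * t) ∧
    (∀ lam lam' : ℝ, lam ≠ lam' → Pl lam ≠ Pl lam') := by
  have hT0 : (0:ℝ) ≤ T := hT.le
  refine ⟨?_, ?_, ?_⟩
  · intro lam
    have habs : Pl lam ≪ P := by
      rw [hPl lam]; exact withDensity_absolutelyContinuous P _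
    refine ⟨?_, ?_, ?_, ?_, ?_⟩
    · exact fun t => (hW.meas t).sub_const _
    · exact ((hW.init.filter_mono habs.ae_le)).mono fun ω h => by simp [h]
    · refine ((hW.cont.filter_mono habs.ae_le)).mono fun ω h => ?_
      exact h.sub ((continuous_const.mul continuous_id).continuousOn)
    · intro s t hs hst htT
      show (Pl lam).map (fun ω => (W t ω - lam * t) - (W s ω - lam * s))
        = gaussianReal 0 (Real.toNNReal (t - s))
      have hfe : (fun ω => (W t ω - lam * t) - (W s ω - lam * s))
          = fun ω => (W t ω - W s ω) - lam * (t - s) := funext fun ω => by ring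
      rw [hfe, hPl lam]
      exact gaussPl P W hW lam hs hst htT
    · intro s t hs hst htT
      show Indep
        (MeasurableSpace.comap (fun ω => (W t ω - lam * t) - (W s ω - lam * s))
          Real.measurableSpace)
        (⨆ u ∈ Set.Icc (0:ℝ) s,
          MeasurableSpace.comap (fun ω => W u ω - lam * u) Real.measurableSpace)
        (Pl lam)
      have h1 : (MeasurableSpace.comap (fun ω => (W t ω - lam * t) - (W s ω - lam * s))
            Real.measurableSpace)
          = MeasurableSpace.comap (fun ω => W t ω - W s ω) Real.measurableSpace := by
        have hfe : (fun ω => (W t ω - lam * t) - (W s ω - lam * s))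
            = fun ω => (W t ω - W s ω) - lam * (t - s) := funext fun ω => by ring
        rw [hfe, comap_sub_const]
      have h2 : (⨆ u ∈ Set.Icc (0:ℝ) s,
            MeasurableSpace.comap (fun ω => W u ω - lam * u) Real.measurableSpace)
          = sigUpTo W s :=
        iSup_congr fun u => iSup_congr fun _ => comap_sub_const (W u) (lam * u)
      rw [h1, h2, hPl lam]
      exact indepPl P W hW lam hs hst htT
  · intro lam t _ ω
    simp only [hX, intervalIntegral.integral_zero]
    ring
  · intro lam lam' hne heq
    have hphi : ∀ a : ℝ, ∫⁻ ω, ENNReal.ofReal (Real.exp (W T ω)) ∂(Pl a)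
        = ENNReal.ofReal (Real.exp ((2 * a + 1) * T / 2)) := by
      intro a
      have hDmeas : Measurable fun ω => ENNReal.ofReal (Real.exp (a * W T ω - a ^ 2 * T / 2)) :=
        ENNReal.measurable_ofReal.comp (Real.measurable_exp.comp
          (((hW.meas T).const_mul a).sub measurable_const))
      have hg : Measurable fun ω => ENNReal.ofReal (Real.exp (W T ω)) :=
        ENNReal.measurable_ofReal.comp (Real.measurable_exp.comp (hW.meas T))
      rw [hPl a, lintegral_withDensity_eq_lintegral_mul _ hDmeas hg]
      have hpt : ∀ ω, ((fun ω => ENNReal.ofReal (Real.exp (a * W T ω - a ^ 2 * T / 2)))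
            * fun ω => ENNReal.ofReal (Real.exp (W T ω))) ω
          = ENNReal.ofReal (Real.exp ((a + 1) * W T ω - (a + 1) ^ 2 * T / 2))
            * ENNReal.ofReal (Real.exp ((2 * a + 1) * T / 2)) := by
        intro ω
        simp only [Pi.mul_apply]
        rw [← ENNReal.ofReal_mul (Real.exp_nonneg _), ← ENNReal.ofReal_mul (Real.exp_nonneg _),
          ← Real.exp_add, ← Real.exp_add]
        congr 1
        ring
      rw [lintegral_congr hpt, lintegral_mul_const' _ _ ENNReal.ofReal_ne_top,
        mass P hT0 W hW (a + 1), one_mul]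
    have he : ENNReal.ofReal (Real.exp ((2 * lam + 1) * T / 2))
        = ENNReal.ofReal (Real.exp ((2 * lam' + 1) * T / 2)) := by
      rw [← hphi lam, ← hphi lam', heq]
    rw [ENNReal.ofReal_eq_ofReal_iff (Real.exp_nonneg _) (Real.exp_nonneg _),
      Real.exp_eq_exp] at he
    have h0 : (lam - lam') * T = 0 := by linear_combination he
    rcases mul_eq_zero.mp h0 with h | h
    · exact hne (by linarith)
    · exact hT.ne' h
end

section
/- Let f: ℝ → ℝ be strictly increasing and continuous with lim_{x→−∞} f(x) = 1 and lim_{x→+∞} f(x) = 2, and define X(t) = f(W(t))/(T−t) for t ∈ [0,T), X(T) = 0, on the canonical Wiener space. Then for every ω ∈ C([0,T],ℝ), lim_{t↑T} (W(t) − ∫₀ᵗ X(u) du) = −∞; consequently, there exists no probability measure Q on (Ω, F_T) under which the process t ↦ W(t) − ∫₀ᵗ X(u) du is a Brownian motion. -/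
open MeasureTheory ProbabilityTheory Filter Set
open scoped ENNReal NNReal

/-- non-existence of the candidate measure: on the canonical space of
continuous paths with coordinate process `W(t)(ω) = ω(t)`, let `f` be strictly increasing
and continuous with limits `1` at `-∞` and `2` at `+∞`, and `X(t) = f(W(t))/(T-t)` for
`t < T`, `X(T) = 0`. Then for every path `ω`, `W(t) - ∫₀ᵗ X(u)du → -∞` as `t ↑ T`;
consequently there is no probability measure `Q` under which `t ↦ W(t) - ∫₀ᵗ X(u)du` is a
Brownian motion on `[0,T]`. -/
theorem stmt6 [MeasurableSpace C(ℝ, ℝ)] [BorelSpace C(ℝ, ℝ)]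
    (T : ℝ) (hT : 0 < T)
    (f : ℝ → ℝ) (hf_mono : StrictMono f) (hf_cont : Continuous f)
    (hf_bot : Tendsto f atBot (nhds 1)) (hf_top : Tendsto f atTop (nhds 2))
    (X : ℝ → C(ℝ, ℝ) → ℝ)
    (hX : ∀ t (ω : C(ℝ, ℝ)), X t ω = if t < T then f (ω t) / (T - t) else 0) :
    (∀ ω : C(ℝ, ℝ),
      Tendsto (fun t => ω t - ∫ u in (0:ℝ)..t, X u ω) (nhdsWithin T (Set.Iio T)) atBot) ∧
    ¬ ∃ Q : Measure C(ℝ, ℝ), IsProbabilityMeasure Q ∧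
        IsBMOn Q (fun t ω => ω t - ∫ u in (0:ℝ)..t, X u ω) T := by
  -- f is bounded below by 1
  have hf_one : ∀ x : ℝ, 1 ≤ f x := by
    intro x
    have h1 : (1 : ℝ) ≤ f (x - 1) := by
      refine le_of_tendsto hf_bot ?_
      filter_upwards [eventually_le_atBot (x - 1)] with y hy
      exact hf_mono.monotone hy
    linarith [hf_mono (show x - 1 < x by linarith)]
  have main : ∀ ω : C(ℝ, ℝ),
      Tendsto (fun t => ω t - ∫ u in (0:ℝ)..t, X u ω) (nhdsWithin T (Set.Iio T)) atBot := by
    intro ω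
    -- the comparison function
    have hcomp : Tendsto (fun t => ω t - Real.log (T / (T - t))) (nhdsWithin T (Set.Iio T))
        atBot := by
      have h1 : Tendsto (fun t : ℝ => T - t) (nhdsWithin T (Set.Iio T))
          (nhdsWithin 0 (Set.Ioi 0)) := by
        rw [tendsto_nhdsWithin_iff]
        constructor
        · have : Tendsto (fun t : ℝ => T - t) (nhds T) (nhds (T - T)) :=
            (tendsto_const_nhds.sub tendsto_id)
          simpa using this.mono_left nhdsWithin_le_nhds
        · filter_upwards [self_mem_nhdsWithin] with t (ht : t < T)
          simpa using ht
      have h2 : Tendsto (fun t : ℝ => T / (T - t)) (nhdsWithin T (Set.Iio T)) atTop := by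
        have : Tendsto (fun t : ℝ => (T - t)⁻¹) (nhdsWithin T (Set.Iio T)) atTop :=
          tendsto_inv_nhdsGT_zero.comp h1
        have := this.const_mul_atTop hT
        simpa [div_eq_mul_inv] using this
      have hlog : Tendsto (fun t : ℝ => Real.log (T / (T - t)))
          (nhdsWithin T (Set.Iio T)) atTop := Real.tendsto_log_atTop.comp h2
      have hω : Tendsto (fun t : ℝ => ω t) (nhdsWithin T (Set.Iio T)) (nhds (ω T)) :=
        (ω.continuous.tendsto T).mono_left nhdsWithin_le_nhds
      simpa [sub_eq_add_neg] using hω.add_atBot (tendsto_neg_atBot_iff.mpr hlog)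
    refine tendsto_atBot_mono' _ ?_ hcomp
    -- eventually `ω t - ∫ X ≤ ω t - log (T/(T-t))`
    have hmem : Set.Ioo 0 T ∈ nhdsWithin T (Set.Iio T) := by
      refine mem_nhdsWithin.2 ⟨Set.Ioi 0, isOpen_Ioi, hT, ?_⟩
      rintro t ⟨ht0, htT⟩
      exact ⟨ht0, htT⟩
    filter_upwards [hmem] with t ht
    obtain ⟨ht0, htT⟩ := ht
    have hTt : 0 < T - t := by linarith
    -- continuous versions
    have hcontg : ContinuousOn (fun u => f (ω u) / (T - u)) (Set.Icc 0 t) := by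
      refine ContinuousOn.div (hf_cont.comp ω.continuous).continuousOn
        (continuous_const.sub continuous_id).continuousOn ?_
      rintro u ⟨_, hu⟩
      have : u < T := lt_of_le_of_lt hu htT
      intro h; linarith [sub_pos.mpr this, h]
    have huIcc : Set.uIcc (0:ℝ) t = Set.Icc 0 t := Set.uIcc_of_le ht0.le
    have hintg : IntervalIntegrable (fun u => f (ω u) / (T - u)) volume 0 t := by
      apply ContinuousOn.intervalIntegrable
      rwa [huIcc]
    have hconti : ContinuousOn (fun u : ℝ => (T - u)⁻¹) (Set.Icc 0 t) := by
      refine ContinuousOn.inv₀ (continuous_const.sub continuous_id).continuousOn ?_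
      rintro u ⟨_, hu⟩
      have : u < T := lt_of_le_of_lt hu htT
      intro h; linarith [sub_pos.mpr this, h]
    have hinti : IntervalIntegrable (fun u : ℝ => (T - u)⁻¹) volume 0 t := by
      apply ContinuousOn.intervalIntegrable
      rwa [huIcc]
    have hXeq : ∫ u in (0:ℝ)..t, X u ω = ∫ u in (0:ℝ)..t, f (ω u) / (T - u) := by
      refine intervalIntegral.integral_congr ?_
      intro u hu
      rw [huIcc] at hu
      show X u ω = f (ω u) / (T - u)
      rw [hX, if_pos (lt_of_le_of_lt hu.2 htT)]
    have hinv : ∫ u in (0:ℝ)..t, (T - u)⁻¹ = Real.log (T / (T - t)) := by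
      rw [intervalIntegral.integral_comp_sub_left (fun x => x⁻¹) T]
      rw [sub_zero]
      rw [integral_inv (Set.notMem_uIcc_of_lt hTt hT)]
    have hmono : ∫ u in (0:ℝ)..t, (T - u)⁻¹ ≤ ∫ u in (0:ℝ)..t, f (ω u) / (T - u) := by
      refine intervalIntegral.integral_mono_on ht0.le hinti hintg ?_
      rintro u ⟨_, hu⟩
      have huT : 0 < T - u := by linarith [lt_of_le_of_lt hu htT]
      calc (T - u)⁻¹ = 1 / (T - u) := (one_div _).symm
        _ ≤ f (ω u) / (T - u) := div_le_div_of_nonneg_right (hf_one _) huT.le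
    have : Real.log (T / (T - t)) ≤ ∫ u in (0:ℝ)..t, X u ω := by
      rw [hXeq, ← hinv]; exact hmono
    linarith
  refine ⟨main, ?_⟩
  rintro ⟨Q, hQ, hBM⟩
  -- get one path where the process is continuous on [0,T]
  obtain ⟨ω, hω⟩ := hBM.cont.exists
  have hTmem : T ∈ Set.Icc (0:ℝ) T := ⟨hT.le, le_refl _⟩
  have hcw : Tendsto (fun t => ω t - ∫ u in (0:ℝ)..t, X u ω)
      (nhdsWithin T (Set.Icc 0 T)) (nhds (ω T - ∫ u in (0:ℝ)..T, X u ω)) := hω T hTmem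
  have hle : nhdsWithin T (Set.Iio T) ≤ nhdsWithin T (Set.Icc 0 T) := by
    refine nhdsWithin_le_iff.mpr ?_
    refine mem_nhdsWithin.2 ⟨Set.Ioi 0, isOpen_Ioi, hT, ?_⟩
    rintro t ⟨ht0, htT⟩
    exact ⟨le_of_lt ht0, le_of_lt htT⟩
  have hnhds : Tendsto (fun t => ω t - ∫ u in (0:ℝ)..t, X u ω)
      (nhdsWithin T (Set.Iio T)) (nhds (ω T - ∫ u in (0:ℝ)..T, X u ω)) :=
    hcw.mono_left hle
  exact not_tendsto_atBot_of_tendsto_nhds hnhds (main ω)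
end
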